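/- Let Φ : α^ℤ → α^ℤ be a cellular automaton on a finite alphabet α with quiescent state B. The following are equivalent: (1) Φ is asymptotically nilpotent in density; (2) Ω_Φ ⊆ [B^∞], i.e., every configuration in the limit set is in the Besicovitch class of the constant-B configuration; (3) lim_{ℓ→∞} max_{w ∈ B_ℓ(Ω_Φ)} (1/ℓ)·|{i ∈ [0, ℓ−1] : w_i ≠ B}| = 0. -/

import Mathlib

open Filter

/-- The Besicovitch pseudometric on `α^ℤ`:
`d_B(x,y) = limsup_{n→∞} |{i ∈ [-n,n] : x_i ≠ y_i}| / (2n+1)`. -/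
noncomputable def besicovitchDist {α : Type} [DecidableEq α] (x y : ℤ → α) : ℝ :=
  Filter.limsup (fun n : ℕ =>
      (((Finset.Icc (-(n : ℤ)) (n : ℤ)).filter fun i => x i ≠ y i).card : ℝ) /
        (2 * (n : ℝ) + 1))
    Filter.atTop

set_option linter.unusedSectionVars false

open Finset

namespace ANDproof

lemma card_filter_range_eq (p : ℤ → Prop) [DecidablePred p] (i : ℤ) (ℓ : ℕ) :
    ((Finset.range ℓ).filter fun j : ℕ => p (i + j)).card =
      ((Finset.Ico i (i + ℓ)).filter p).card := by
  apply Finset.card_nbij' (fun j : ℕ => i + (j : ℤ)) (fun k : ℤ => (k - i).toNat)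
  · intro j hj
    simp only [mem_coe, mem_filter, mem_range] at hj
    simp only [mem_coe, mem_filter, Finset.mem_Ico]
    exact ⟨⟨by omega, by omega⟩, hj.2⟩
  · intro k hk
    simp only [mem_coe, mem_filter, Finset.mem_Ico] at hk
    simp only [mem_coe, mem_filter, mem_range]
    refine ⟨by omega, ?_⟩
    have : i + ((k - i).toNat : ℤ) = k := by omega
    rw [this]; exact hk.2
  · intro j hj; simp only [mem_coe, mem_filter, mem_range] at hj; beta_reduce; omega
  · intro k hk; simp only [mem_coe, mem_filter, Finset.mem_Ico] at hk; beta_reduce; omega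

lemma card_filter_shift (p : ℤ → Prop) [DecidablePred p] (a b t : ℤ) :
    ((Finset.Icc a b).filter fun k : ℤ => p (k + t)).card =
      ((Finset.Icc (a + t) (b + t)).filter p).card := by
  apply Finset.card_nbij' (fun k : ℤ => k + t) (fun k : ℤ => k - t)
  · intro k hk
    simp only [mem_coe, mem_filter, Finset.mem_Icc] at *
    exact ⟨⟨by omega, by omega⟩, hk.2⟩
  · intro k hk
    simp only [mem_coe, mem_filter, Finset.mem_Icc] at *
    refine ⟨⟨by omega, by omega⟩, ?_⟩
    have : k - t + t = k := by omega
    rw [this]; exact hk.2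
  · intro k _; beta_reduce; omega
  · intro k _; beta_reduce; omega

lemma count_split (p : ℤ → Prop) [DecidablePred p] (a : ℤ) (u v : ℕ) (huv : u ≤ v) :
    ((Finset.Ico a (a+u)).filter p).card
      + ((Finset.Ico (a+u) (a+v)).filter p).card
      = ((Finset.Ico a (a+v)).filter p).card := by
  rw [← Finset.card_union_of_disjoint, ← Finset.filter_union,
    Finset.Ico_union_Ico_eq_Ico (by omega) (by omega : (a:ℤ)+u ≤ a+v)]
  exact (Finset.Ico_disjoint_Ico_consecutive a (a+u) (a+v)).mono
    (Finset.filter_subset _ _) (Finset.filter_subset _ _)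

lemma count_chunk_le (p : ℤ → Prop) [DecidablePred p] (a : ℤ) (u v : ℕ) (huv : u ≤ v) :
    ((Finset.Ico (a+u) (a+v)).filter p).card ≤ v - u := by
  calc ((Finset.Ico (a+u) (a+v)).filter p).card ≤ (Finset.Ico (a+(u:ℤ)) (a+v)).card :=
        Finset.card_filter_le _ _
    _ = v - u := by rw [Int.card_Ico]; omega

lemma exists_min_le (g : ℕ → ℝ) (ℓ : ℕ) : ∃ c, c ≤ ℓ ∧ ∀ j, j ≤ ℓ → g c ≤ g j := by
  obtain ⟨c, hc, hmin⟩ := Finset.exists_min_image (Finset.range (ℓ+1)) g ⟨0, by simp⟩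
  exact ⟨c, by simp at hc; omega,
    fun j hj => hmin j (Finset.mem_range.mpr (by omega))⟩

lemma risingSun (p : ℤ → Prop) [DecidablePred p] (a : ℤ) (ℓ : ℕ) (δ : ℝ) (hδ : 0 < δ)
    (h : δ * ℓ < (((Finset.Ico a (a+ℓ)).filter p).card : ℝ)) :
    ∃ C : ℤ, ∀ m : ℕ, ((m:ℝ)+1) ≤ (δ/2) * ℓ →
      (δ/2) * ((m:ℝ)+1) ≤ (((Finset.Icc C (C+m)).filter p).card : ℝ) := by
  obtain ⟨c, hcle, hcmin⟩ := exists_min_le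
    (fun j : ℕ => (((Finset.Ico a (a+(j:ℤ))).filter p).card : ℝ) - (δ/2) * j) ℓ
  have hc0 : (((Finset.Ico a (a+(c:ℤ))).filter p).card : ℝ) - (δ/2) * c ≤ 0 := by
    have h0 := hcmin 0 (by omega)
    simpa using h0
  have hcl := hcmin ℓ le_rfl
  have hclR : (c:ℝ) ≤ (ℓ:ℝ) := by exact_mod_cast hcle
  have hmul : (δ/2) * c ≤ (δ/2) * ℓ :=
    mul_le_mul_of_nonneg_left hclR (by linarith)
  have e1 : (((Finset.Ico a (a+(c:ℤ))).filter p).card : ℝ)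
      + (((Finset.Ico (a+(c:ℤ)) (a+(ℓ:ℤ))).filter p).card : ℝ)
      = (((Finset.Ico a (a+(ℓ:ℤ))).filter p).card : ℝ) := by
    exact_mod_cast congrArg (Nat.cast : ℕ → ℝ) (count_split p a c ℓ hcle)
  have e2 : (((Finset.Ico (a+(c:ℤ)) (a+(ℓ:ℤ))).filter p).card : ℝ) ≤ (ℓ:ℝ) - c := by
    have h1 : (((Finset.Ico (a+(c:ℤ)) (a+(ℓ:ℤ))).filter p).card : ℝ) ≤ ((ℓ - c : ℕ) : ℝ) := by
      exact_mod_cast count_chunk_le p a c ℓ hcle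
    have h2 : ((ℓ - c : ℕ) : ℝ) = (ℓ:ℝ) - c := by
      rw [Nat.cast_sub hcle]
    linarith
  have hstep1 : (δ/2) * ℓ < (ℓ:ℝ) - c := by linarith
  refine ⟨a + c, ?_⟩
  intro m hm
  have hcm : c + (m+1) ≤ ℓ := by
    have hx : ((c + (m+1) : ℕ) : ℝ) ≤ (ℓ:ℝ) := by push_cast; linarith
    exact_mod_cast hx
  have hmin := hcmin (c + (m+1)) hcm
  have e3 : (((Finset.Ico a (a+(c:ℤ))).filter p).card : ℝ)
      + (((Finset.Ico (a+(c:ℤ)) (a+((c+(m+1):ℕ):ℤ))).filter p).card : ℝ)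
      = (((Finset.Ico a (a+((c+(m+1):ℕ):ℤ))).filter p).card : ℝ) := by
    exact_mod_cast congrArg (Nat.cast : ℕ → ℝ) (count_split p a c (c+(m+1)) (by omega))
  have hcast : ((c + (m+1) : ℕ) : ℝ) = (c:ℝ) + (m+1) := by push_cast; ring
  have key : (δ/2) * ((m:ℝ)+1)
      ≤ (((Finset.Ico (a+(c:ℤ)) (a+((c+(m+1):ℕ):ℤ))).filter p).card : ℝ) := by
    rw [hcast] at hmin
    linarith
  have heq : Finset.Ico (a+(c:ℤ)) (a+((c+(m+1):ℕ):ℤ)) = Finset.Icc (a+(c:ℤ)) (a+(c:ℤ)+(m:ℤ)) := by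
    ext k
    simp only [Finset.mem_Ico, Finset.mem_Icc]
    push_cast
    omega
  rw [heq] at key
  exact key


section besi
variable {α : Type} [DecidableEq α] (x y : ℤ → α)

lemma card_Icc_int (n : ℕ) : (Finset.Icc (-(n:ℤ)) (n:ℤ)).card = 2*n+1 := by
  rw [Int.card_Icc]; omega

lemma besiSeq_nonneg (n : ℕ) :
    0 ≤ (((Finset.Icc (-(n : ℤ)) (n : ℤ)).filter fun i => x i ≠ y i).card : ℝ) /
        (2 * (n : ℝ) + 1) := by positivity

lemma besiSeq_le_one (n : ℕ) :
    (((Finset.Icc (-(n : ℤ)) (n : ℤ)).filter fun i => x i ≠ y i).card : ℝ) /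
        (2 * (n : ℝ) + 1) ≤ 1 := by
  rw [div_le_one (by positivity)]
  calc (((Finset.Icc (-(n : ℤ)) (n : ℤ)).filter fun i => x i ≠ y i).card : ℝ)
      ≤ ((Finset.Icc (-(n:ℤ)) (n:ℤ)).card : ℝ) := by
        exact_mod_cast Finset.card_filter_le _ _
    _ = 2*(n:ℝ)+1 := by rw [card_Icc_int]; push_cast; ring

lemma besi_isBounded :
    IsBoundedUnder (· ≤ ·) atTop (fun n : ℕ =>
      (((Finset.Icc (-(n : ℤ)) (n : ℤ)).filter fun i => x i ≠ y i).card : ℝ) /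
        (2 * (n : ℝ) + 1)) :=
  isBoundedUnder_of ⟨1, fun n => besiSeq_le_one x y n⟩

lemma besi_isCobounded :
    IsCoboundedUnder (· ≤ ·) atTop (fun n : ℕ =>
      (((Finset.Icc (-(n : ℤ)) (n : ℤ)).filter fun i => x i ≠ y i).card : ℝ) /
        (2 * (n : ℝ) + 1)) :=
  isCoboundedUnder_le_of_le atTop (fun n => besiSeq_nonneg x y n)

lemma besi_nonneg : 0 ≤ besicovitchDist x y :=
  le_limsup_of_frequently_le (Frequently.of_forall fun n => besiSeq_nonneg x y n)
    (besi_isBounded x y)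

lemma le_besi (δ : ℝ)
    (h : ∀ n : ℕ, δ ≤ (((Finset.Icc (-(n : ℤ)) (n : ℤ)).filter fun i => x i ≠ y i).card : ℝ) /
        (2 * (n : ℝ) + 1)) : δ ≤ besicovitchDist x y :=
  le_limsup_of_frequently_le (Frequently.of_forall h) (besi_isBounded x y)

lemma besi_le (b : ℕ → ℝ) (L : ℝ)
    (h : ∀ n : ℕ, (((Finset.Icc (-(n : ℤ)) (n : ℤ)).filter fun i => x i ≠ y i).card : ℝ) /
        (2 * (n : ℝ) + 1) ≤ b n)
    (hL : Tendsto b atTop (nhds L)) : besicovitchDist x y ≤ L := by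
  have := Filter.limsup_le_limsup (Eventually.of_forall h) (besi_isCobounded x y)
    hL.isBoundedUnder_le
  rwa [hL.limsup_eq] at this
end besi

def shiftZ {α : Type} (k : ℤ) (x : ℤ → α) : ℤ → α := fun i => x (i + k)

@[simp] lemma shiftZ_zero {α : Type} (x : ℤ → α) : shiftZ 0 x = x := by funext i; simp [shiftZ]

lemma shiftZ_shiftZ {α : Type} (k l : ℤ) (x : ℤ → α) :
    shiftZ k (shiftZ l x) = shiftZ (k + l) x := by
  funext i; simp [shiftZ, add_assoc]

section omega
variable {α : Type} [Fintype α] [DecidableEq α] [TopologicalSpace α] [DiscreteTopology α]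
  {Φ : (ℤ → α) → (ℤ → α)}

lemma comm_all (hcomm : ∀ x : ℤ → α, Φ (fun i => x (i + 1)) = fun i => Φ x (i + 1)) :
    ∀ (k : ℤ) (x : ℤ → α), Φ (shiftZ k x) = shiftZ k (Φ x) := by
  have h1 : ∀ x : ℤ → α, Φ (shiftZ 1 x) = shiftZ 1 (Φ x) := fun x => hcomm x
  have hm1 : ∀ x : ℤ → α, Φ (shiftZ (-1) x) = shiftZ (-1) (Φ x) := by
    intro x
    have h2 := h1 (shiftZ (-1) x)
    rw [shiftZ_shiftZ] at h2
    norm_num at h2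
    calc Φ (shiftZ (-1) x) = shiftZ (-1) (shiftZ 1 (Φ (shiftZ (-1) x))) := by
          rw [shiftZ_shiftZ]; norm_num
      _ = shiftZ (-1) (Φ x) := by rw [← h2]
  intro k
  induction k using Int.induction_on with
  | zero => simp
  | succ n ih =>
      intro x
      have e : shiftZ ((n : ℤ) + 1) x = shiftZ 1 (shiftZ n x) := by rw [shiftZ_shiftZ]; ring_nf
      rw [e, h1, ih, shiftZ_shiftZ]
      ring_nf
  | pred n ih =>
      intro x
      have e : shiftZ (-(n : ℤ) - 1) x = shiftZ (-1) (shiftZ (-n) x) := by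
        rw [shiftZ_shiftZ]; ring_nf
      rw [e, hm1, ih, shiftZ_shiftZ]
      ring_nf

lemma iter_comm (hcomm : ∀ x : ℤ → α, Φ (fun i => x (i + 1)) = fun i => Φ x (i + 1)) :
    ∀ (n : ℕ) (k : ℤ) (x : ℤ → α), Φ^[n] (shiftZ k x) = shiftZ k (Φ^[n] x) := by
  intro n
  induction n with
  | zero => intro k x; simp
  | succ n ih =>
      intro k x
      rw [Function.iterate_succ_apply, comm_all hcomm, ih, Function.iterate_succ_apply]

lemma mem_omega {x : ℤ → α} :
    x ∈ (⋂ n : ℕ, Φ^[n] '' Set.univ) ↔ ∀ n : ℕ, ∃ z, Φ^[n] z = x := by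
  simp [Set.mem_iInter, Set.image_univ, Set.mem_range]

lemma omega_shift (hcomm : ∀ x : ℤ → α, Φ (fun i => x (i + 1)) = fun i => Φ x (i + 1))
    {x : ℤ → α} (k : ℤ) (hx : x ∈ (⋂ n : ℕ, Φ^[n] '' Set.univ)) :
    shiftZ k x ∈ (⋂ n : ℕ, Φ^[n] '' Set.univ) := by
  rw [mem_omega] at hx ⊢
  intro n
  obtain ⟨z, hz⟩ := hx n
  exact ⟨shiftZ k z, by rw [iter_comm hcomm, hz]⟩

lemma B_mem_omega {B : α} (hq : Φ (fun _ => B) = fun _ => B) :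
    (fun _ => B) ∈ (⋂ n : ℕ, Φ^[n] '' Set.univ) := by
  rw [mem_omega]
  intro n
  refine ⟨fun _ => B, ?_⟩
  induction n with
  | zero => simp
  | succ n ih => rw [Function.iterate_succ_apply', ih, hq]

lemma image_compact (hcont : Continuous Φ) (n : ℕ) : IsCompact (Φ^[n] '' Set.univ) :=
  isCompact_univ.image (hcont.iterate n)

lemma image_closed (hcont : Continuous Φ) (n : ℕ) : IsClosed (Φ^[n] '' Set.univ) :=
  (image_compact hcont n).isClosed

lemma image_anti {m n : ℕ} (h : m ≤ n) : Φ^[n] '' Set.univ ⊆ Φ^[m] '' Set.univ := by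
  intro y hy
  obtain ⟨z, -, hz⟩ := hy
  obtain ⟨k, rfl⟩ := Nat.exists_eq_add_of_le h
  exact ⟨Φ^[k] z, trivial, by rw [← hz, ← Function.iterate_add_apply]⟩

lemma omega_closed (hcont : Continuous Φ) : IsClosed (⋂ n : ℕ, Φ^[n] '' Set.univ) :=
  isClosed_iInter (fun n => image_closed hcont n)

lemma omega_compact (hcont : Continuous Φ) : IsCompact (⋂ n : ℕ, Φ^[n] '' Set.univ) :=
  (omega_closed hcont).isCompact

/-- the key compactness lemma: words of iterated images eventually come from Ω. -/
lemma word_lemma (hcont : Continuous Φ)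
    (hcomm : ∀ x : ℤ → α, Φ (fun i => x (i + 1)) = fun i => Φ x (i + 1)) (ℓ : ℕ) :
    ∃ N : ℕ, ∀ (x : ℤ → α) (i : ℤ), ∃ y ∈ (⋂ n : ℕ, Φ^[n] '' Set.univ),
      ∀ j : ℕ, j < ℓ → Φ^[N] x (i + j) = y (j : ℤ) := by
  classical
  set ok : ℕ → (Fin ℓ → α) → Prop :=
    fun n w => ∃ z : ℤ → α, ∀ j : Fin ℓ, Φ^[n] z ((j : ℕ) : ℤ) = w j with hok
  have ok_anti : ∀ {m n : ℕ}, m ≤ n → ∀ {w}, ok n w → ok m w := by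
    intro m n h w hw
    obtain ⟨z, hz⟩ := hw
    obtain ⟨k, rfl⟩ := Nat.exists_eq_add_of_le h
    exact ⟨Φ^[k] z, fun j => by rw [← Function.iterate_add_apply]; exact hz j⟩
  have key : ∀ w : Fin ℓ → α, (∀ n, ok n w) →
      ∃ y ∈ (⋂ n : ℕ, Φ^[n] '' Set.univ), ∀ j : Fin ℓ, y ((j : ℕ) : ℤ) = w j := by
    intro w hw
    set V : ℕ → Set (ℤ → α) :=
      fun n => (Φ^[n] '' Set.univ) ∩ {y | ∀ j : Fin ℓ, y ((j : ℕ) : ℤ) = w j} with hV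
    have hVclosed : ∀ n, IsClosed (V n) := by
      intro n
      apply (image_closed hcont n).inter
      have he : {y : ℤ → α | ∀ j : Fin ℓ, y ((j : ℕ) : ℤ) = w j}
          = ⋂ j : Fin ℓ, (fun y : ℤ → α => y ((j : ℕ) : ℤ)) ⁻¹' {w j} := by
        ext y; simp [Set.mem_iInter]
      rw [he]
      exact isClosed_iInter fun j =>
        (isClosed_singleton).preimage (continuous_apply _)
    have hVnonempty : ∀ n, (V n).Nonempty := by
      intro n
      obtain ⟨z, hz⟩ := hw n
      exact ⟨Φ^[n] z, ⟨z, trivial, rfl⟩, fun j => hz j⟩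
    have hVanti : ∀ n, V (n+1) ⊆ V n := by
      intro n y hy
      exact ⟨image_anti (Nat.le_succ n) hy.1, hy.2⟩
    have hVcompact : IsCompact (V 0) := (hVclosed 0).isCompact
    obtain ⟨y, hy⟩ := IsCompact.nonempty_iInter_of_sequence_nonempty_isCompact_isClosed
      V hVanti hVnonempty hVcompact hVclosed
    rw [Set.mem_iInter] at hy
    refine ⟨y, ?_, fun j => (hy 0).2 j⟩
    rw [Set.mem_iInter]
    exact fun n => (hy n).1
  -- choose a uniform N
  have hchoice : ∀ w : Fin ℓ → α, ¬ (∀ n, ok n w) → ∃ n, ¬ ok n w := by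
    intro w hw; push_neg at hw; exact hw
  set nw : (Fin ℓ → α) → ℕ := fun w =>
    if h : ∀ n, ok n w then 0 else (hchoice w h).choose with hnw
  set N := Finset.univ.sup nw with hN
  refine ⟨N, ?_⟩
  intro x i
  set w : Fin ℓ → α := fun j => Φ^[N] x (i + (j : ℕ)) with hw
  have hokN : ok N w := by
    refine ⟨shiftZ i x, fun j => ?_⟩
    rw [iter_comm hcomm]
    simp [shiftZ, hw, add_comm]
  have hall : ∀ n, ok n w := by
    by_contra hcon
    have h1 : ¬ ok (nw w) w := by
      simp only [hnw, dif_neg hcon]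
      exact (hchoice w hcon).choose_spec
    exact h1 (ok_anti (Finset.le_sup (Finset.mem_univ w)) hokN)
  obtain ⟨y, hy, hyw⟩ := key w hall
  refine ⟨y, hy, fun j hj => ?_⟩
  have hj2 := hyw ⟨j, hj⟩
  simp only [hw] at hj2
  exact hj2.symm

end omega
section main
variable {α : Type} [Fintype α] [DecidableEq α] [TopologicalSpace α] [DiscreteTopology α]
  {Φ : (ℤ → α) → (ℤ → α)} {B : α}

lemma S_bdd (ℓ : ℕ) :
    BddAbove {r : ℝ | ∃ x ∈ ⋂ n : ℕ, Φ^[n] '' Set.univ, ∃ i : ℤ,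
      r = (((Finset.range ℓ).filter fun j : ℕ => x (i + (j : ℤ)) ≠ B).card : ℝ) / ℓ} := by
  refine ⟨1, fun r hr => ?_⟩
  obtain ⟨x, -, i, rfl⟩ := hr
  rcases Nat.eq_zero_or_pos ℓ with h | h
  · subst h; simp
  · rw [div_le_one (by exact_mod_cast h)]
    exact_mod_cast (Finset.card_filter_le _ _).trans (Finset.card_range ℓ).le

lemma S_zero_mem (hq : Φ (fun _ => B) = fun _ => B) (ℓ : ℕ) :
    (0:ℝ) ∈ {r : ℝ | ∃ x ∈ ⋂ n : ℕ, Φ^[n] '' Set.univ, ∃ i : ℤ,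
      r = (((Finset.range ℓ).filter fun j : ℕ => x (i + (j : ℤ)) ≠ B).card : ℝ) / ℓ} :=
  ⟨fun _ => B, B_mem_omega hq, 0, by simp⟩

lemma M_nonneg (hq : Φ (fun _ => B) = fun _ => B) (ℓ : ℕ) :
    0 ≤ sSup {r : ℝ | ∃ x ∈ ⋂ n : ℕ, Φ^[n] '' Set.univ, ∃ i : ℤ,
      r = (((Finset.range ℓ).filter fun j : ℕ => x (i + (j : ℤ)) ≠ B).card : ℝ) / ℓ} :=
  le_csSup (S_bdd ℓ) (S_zero_mem hq ℓ)

lemma blocks (p : ℤ → Prop) [DecidablePred p] (ℓ : ℕ) (C : ℝ)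
    (hC : ∀ a : ℤ, (((Finset.Ico a (a+ℓ)).filter p).card : ℝ) ≤ C) :
    ∀ (K : ℕ) (a : ℤ), (((Finset.Ico a (a+(K*ℓ : ℕ))).filter p).card : ℝ) ≤ K * C := by
  intro K
  induction K with
  | zero => intro a; simp
  | succ K ih =>
      intro a
      have hsplit := count_split p a (K*ℓ) ((K+1)*ℓ)
        (Nat.mul_le_mul_right ℓ (Nat.le_succ K))
      have heq : (a + (((K+1)*ℓ : ℕ) : ℤ)) = (a + ((K*ℓ : ℕ) : ℤ)) + (ℓ : ℤ) := by
        push_cast; ring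
      have hlast : (((Finset.Ico (a + ((K*ℓ:ℕ):ℤ)) (a + (((K+1)*ℓ:ℕ):ℤ))).filter p).card : ℝ)
          ≤ C := by
        rw [heq]
        exact hC (a + ((K*ℓ:ℕ):ℤ))
      have hih := ih a
      have hcast : (((Finset.Ico a (a+(((K+1)*ℓ) : ℕ))).filter p).card : ℝ)
          = (((Finset.Ico a (a+((K*ℓ) : ℕ))).filter p).card : ℝ)
            + (((Finset.Ico (a + ((K*ℓ:ℕ):ℤ)) (a + (((K+1)*ℓ:ℕ):ℤ))).filter p).card : ℝ) := by
        exact_mod_cast (congrArg (Nat.cast : ℕ → ℝ) hsplit).symm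
      rw [hcast]
      have hK1 : ((K+1 : ℕ) : ℝ) = (K:ℝ)+1 := by push_cast; ring
      rw [hK1]
      linarith

lemma imp31 (hcont : Continuous Φ)
    (hcomm : ∀ x : ℤ → α, Φ (fun i => x (i + 1)) = fun i => Φ x (i + 1))
    (hq : Φ (fun _ => B) = fun _ => B)
    (h3 : Filter.Tendsto (fun ℓ : ℕ =>
        sSup {r : ℝ | ∃ x ∈ ⋂ n : ℕ, Φ^[n] '' Set.univ, ∃ i : ℤ,
          r = (((Finset.range ℓ).filter fun j : ℕ => x (i + (j : ℤ)) ≠ B).card : ℝ) / ℓ})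
      Filter.atTop (nhds 0)) :
    ∀ ε : ℝ, 0 < ε → ∃ n : ℕ, ∀ x : ℤ → α,
      besicovitchDist (Φ^[n] x) (fun _ => B) < ε := by
  intro ε hε
  rw [Metric.tendsto_atTop] at h3
  obtain ⟨L0, hL0⟩ := h3 (ε/4) (by positivity)
  have hℓ1 : 1 ≤ max L0 1 := le_max_right _ _
  set ℓ := max L0 1 with hℓdef
  have hℓpos : (0:ℝ) < (ℓ:ℝ) := by exact_mod_cast hℓ1
  have hM := hL0 ℓ (le_max_left _ _)
  rw [Real.dist_eq, sub_zero] at hM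
  have hMlt : sSup {r : ℝ | ∃ x ∈ ⋂ n : ℕ, Φ^[n] '' Set.univ, ∃ i : ℤ,
      r = (((Finset.range ℓ).filter fun j : ℕ => x (i + (j : ℤ)) ≠ B).card : ℝ) / ℓ}
      < ε/4 := lt_of_le_of_lt (le_abs_self _) hM
  obtain ⟨N, hN⟩ := word_lemma hcont hcomm ℓ
  refine ⟨N, fun x => ?_⟩
  have hwin : ∀ a : ℤ,
      (((Finset.Ico a (a+(ℓ:ℤ))).filter fun k => Φ^[N] x k ≠ B).card : ℝ) ≤ (ε/4) * ℓ := by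
    intro a
    obtain ⟨y, hy, hmatch⟩ := hN x a
    have e0 : ((Finset.Ico a (a+(ℓ:ℤ))).filter fun k => Φ^[N] x k ≠ B).card
        = ((Finset.range ℓ).filter fun j : ℕ => Φ^[N] x (a + (j:ℤ)) ≠ B).card :=
      (card_filter_range_eq (fun k => Φ^[N] x k ≠ B) a ℓ).symm
    have e1 : ((Finset.range ℓ).filter fun j : ℕ => Φ^[N] x (a + (j:ℤ)) ≠ B)
        = ((Finset.range ℓ).filter fun j : ℕ => y ((0:ℤ) + (j:ℤ)) ≠ B) := by
      apply Finset.filter_congr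
      intro j hj
      rw [Finset.mem_range] at hj
      rw [hmatch j hj, zero_add]
    have hrS : (((Finset.range ℓ).filter fun j : ℕ => y ((0:ℤ) + (j:ℤ)) ≠ B).card : ℝ)/(ℓ:ℝ)
        ∈ {r : ℝ | ∃ x ∈ ⋂ n : ℕ, Φ^[n] '' Set.univ, ∃ i : ℤ,
          r = (((Finset.range ℓ).filter fun j : ℕ => x (i + (j : ℤ)) ≠ B).card : ℝ) / ℓ} :=
      ⟨y, hy, 0, rfl⟩
    have hr4 : (((Finset.range ℓ).filter fun j : ℕ => y ((0:ℤ) + (j:ℤ)) ≠ B).card : ℝ)/(ℓ:ℝ)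
        < ε/4 := lt_of_le_of_lt (le_csSup (S_bdd ℓ) hrS) hMlt
    rw [e0, e1]
    have hfs : (((Finset.range ℓ).filter fun j : ℕ => y ((0:ℤ) + (j:ℤ)) ≠ B).card : ℝ)
        = ((((Finset.range ℓ).filter fun j : ℕ => y ((0:ℤ) + (j:ℤ)) ≠ B).card : ℝ)/(ℓ:ℝ)) * ℓ := by
      field_simp
    rw [hfs]
    exact mul_le_mul_of_nonneg_right (le_of_lt hr4) (le_of_lt hℓpos)
  have hband : ∀ n : ℕ,
      (((Finset.Icc (-(n:ℤ)) (n:ℤ)).filter fun i => Φ^[N] x i ≠ B).card : ℝ)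
        ≤ (ε/4) * ((2*(n:ℝ)+1) + ℓ) := by
    intro n
    set K := (2*n+1)/ℓ + 1 with hK
    have h1 : (2*n+1) % ℓ < ℓ := Nat.mod_lt _ (by omega)
    have h2 : ℓ * ((2*n+1)/ℓ) + (2*n+1) % ℓ = 2*n+1 := Nat.div_add_mod _ _
    have hKi : 2*n+1 ≤ K*ℓ := by
      calc 2*n+1 = ℓ * ((2*n+1)/ℓ) + (2*n+1)%ℓ := h2.symm
        _ ≤ ℓ * ((2*n+1)/ℓ) + ℓ := by omega
        _ = K * ℓ := by rw [hK]; ring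
    have hKu : K*ℓ ≤ 2*n+1+ℓ := by
      have h5 := Nat.div_mul_le_self (2*n+1) ℓ
      calc K*ℓ = ((2*n+1)/ℓ)*ℓ + ℓ := by rw [hK]; ring
        _ ≤ 2*n+1+ℓ := by omega
    have hsub : Finset.Icc (-(n:ℤ)) (n:ℤ) ⊆ Finset.Ico (-(n:ℤ)) ((-(n:ℤ)) + ((K*ℓ:ℕ):ℤ)) := by
      intro k hk
      simp only [Finset.mem_Icc] at hk
      simp only [Finset.mem_Ico]
      omega
    have hc1 : ((Finset.Icc (-(n:ℤ)) (n:ℤ)).filter fun i => Φ^[N] x i ≠ B).card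
        ≤ ((Finset.Ico (-(n:ℤ)) ((-(n:ℤ)) + ((K*ℓ:ℕ):ℤ))).filter fun i => Φ^[N] x i ≠ B).card :=
      Finset.card_le_card (Finset.filter_subset_filter _ hsub)
    have hc2 := blocks (fun k => Φ^[N] x k ≠ B) ℓ ((ε/4)*ℓ) hwin K (-(n:ℤ))
    have hKur : ((K:ℝ))*(ℓ:ℝ) ≤ 2*(n:ℝ)+1+(ℓ:ℝ) := by exact_mod_cast hKu
    calc (((Finset.Icc (-(n:ℤ)) (n:ℤ)).filter fun i => Φ^[N] x i ≠ B).card : ℝ)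
        ≤ (((Finset.Ico (-(n:ℤ)) ((-(n:ℤ)) + ((K*ℓ:ℕ):ℤ))).filter fun i => Φ^[N] x i ≠ B).card : ℝ) := by
          exact_mod_cast hc1
      _ ≤ K * ((ε/4)*ℓ) := hc2
      _ ≤ (ε/4) * ((2*(n:ℝ)+1) + ℓ) := by nlinarith
  have h2t : Tendsto (fun n:ℕ => 2*(n:ℝ)+1) atTop atTop := by
    apply tendsto_atTop_add_const_right
    exact Tendsto.const_mul_atTop two_pos tendsto_natCast_atTop_atTop
  have h3t : Tendsto (fun n:ℕ => (2*(n:ℝ)+1)⁻¹) atTop (nhds 0) := h2t.inv_tendsto_atTop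
  have h4t : Tendsto (fun n:ℕ => ε/4 + (ε/4)*(ℓ:ℝ) * (2*(n:ℝ)+1)⁻¹) atTop (nhds (ε/4)) := by
    have h5t : Tendsto (fun n:ℕ => (ε/4)*(ℓ:ℝ) * (2*(n:ℝ)+1)⁻¹) atTop (nhds 0) := by
      have := h3t.const_mul ((ε/4)*(ℓ:ℝ))
      simpa using this
    have h6t : Tendsto (fun n:ℕ => ε/4 + (ε/4)*(ℓ:ℝ)*(2*(n:ℝ)+1)⁻¹) atTop (nhds (ε/4 + 0)) :=
      Tendsto.add tendsto_const_nhds h5t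
    simpa using h6t
  have hfin : besicovitchDist (Φ^[N] x) (fun _ => B) ≤ ε/4 := by
    apply besi_le (Φ^[N] x) (fun _ => B) (fun n:ℕ => ε/4 + (ε/4)*(ℓ:ℝ) * (2*(n:ℝ)+1)⁻¹) (ε/4)
      _ h4t
    intro n
    have hpos : (0:ℝ) < 2*(n:ℝ)+1 := by positivity
    rw [div_le_iff₀ hpos]
    have hbm : (ε/4 + (ε/4)*(ℓ:ℝ) * (2*(n:ℝ)+1)⁻¹) * (2*(n:ℝ)+1)
        = ε/4*(2*(n:ℝ)+1) + ε/4*(ℓ:ℝ) := by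
      field_simp
    rw [hbm]
    have := hband n
    calc (((Finset.Icc (-(n:ℤ)) (n:ℤ)).filter fun i => Φ^[N] x i ≠ (fun _ => B) i).card : ℝ)
        = (((Finset.Icc (-(n:ℤ)) (n:ℤ)).filter fun i => Φ^[N] x i ≠ B).card : ℝ) := rfl
      _ ≤ (ε/4) * ((2*(n:ℝ)+1) + ℓ) := hband n
      _ = ε/4*(2*(n:ℝ)+1) + ε/4*(ℓ:ℝ) := by ring
  linarith

lemma imp12
    (h1 : ∀ ε : ℝ, 0 < ε → ∃ n : ℕ, ∀ x : ℤ → α,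
      besicovitchDist (Φ^[n] x) (fun _ => B) < ε) :
    (⋂ n : ℕ, Φ^[n] '' Set.univ) ⊆ {y : ℤ → α | besicovitchDist y (fun _ => B) = 0} := by
  intro x hx
  simp only [Set.mem_setOf_eq]
  have hnn := besi_nonneg x (fun _ => B)
  by_contra hne
  have hd : 0 < besicovitchDist x (fun _ => B) := lt_of_le_of_ne hnn (Ne.symm hne)
  obtain ⟨n, hn⟩ := h1 _ hd
  obtain ⟨z, hz⟩ := (mem_omega.mp hx) n
  have hzz := hn z
  rw [hz] at hzz
  exact lt_irrefl _ hzz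

lemma imp23 (hcont : Continuous Φ)
    (hcomm : ∀ x : ℤ → α, Φ (fun i => x (i + 1)) = fun i => Φ x (i + 1))
    (hq : Φ (fun _ => B) = fun _ => B)
    (h2 : (⋂ n : ℕ, Φ^[n] '' Set.univ) ⊆ {y : ℤ → α | besicovitchDist y (fun _ => B) = 0}) :
    Filter.Tendsto (fun ℓ : ℕ =>
        sSup {r : ℝ | ∃ x ∈ ⋂ n : ℕ, Φ^[n] '' Set.univ, ∃ i : ℤ,
          r = (((Finset.range ℓ).filter fun j : ℕ => x (i + (j : ℤ)) ≠ B).card : ℝ) / ℓ})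
      Filter.atTop (nhds 0) := by
  by_contra h3
  rw [Metric.tendsto_atTop] at h3
  push_neg at h3
  obtain ⟨ε, hε, hbad⟩ := h3
  have hK : ∀ K : ℕ, ∃ y ∈ (⋂ n : ℕ, Φ^[n] '' Set.univ), ∀ m : ℕ,
      ((m:ℝ)+1) ≤ (ε/2/2) * ((K:ℝ)+1) →
      (ε/2/2) * ((m:ℝ)+1) ≤ (((Finset.Icc (0:ℤ) (m:ℤ)).filter fun k => y k ≠ B).card : ℝ) := by
    intro K
    obtain ⟨ℓ, hℓK, hℓdist⟩ := hbad (K+1)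
    rw [Real.dist_eq, sub_zero] at hℓdist
    have hM0 : 0 ≤ sSup {r : ℝ | ∃ x ∈ ⋂ n : ℕ, Φ^[n] '' Set.univ, ∃ i : ℤ,
        r = (((Finset.range ℓ).filter fun j : ℕ => x (i + (j : ℤ)) ≠ B).card : ℝ) / ℓ} :=
      M_nonneg hq ℓ
    have hMε : ε ≤ sSup {r : ℝ | ∃ x ∈ ⋂ n : ℕ, Φ^[n] '' Set.univ, ∃ i : ℤ,
        r = (((Finset.range ℓ).filter fun j : ℕ => x (i + (j : ℤ)) ≠ B).card : ℝ) / ℓ} := by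
      rwa [abs_of_nonneg hM0] at hℓdist
    obtain ⟨r, hrS, hr⟩ := exists_lt_of_lt_csSup ⟨0, S_zero_mem hq ℓ⟩
      (lt_of_lt_of_le (by linarith : ε/2 < ε) hMε)
    obtain ⟨x, hx, i, rfl⟩ := hrS
    have hℓ1 : 1 ≤ ℓ := le_trans (by omega : 1 ≤ K+1) hℓK
    have hℓpos : (0:ℝ) < (ℓ:ℝ) := by exact_mod_cast hℓ1
    have hcount : (ε/2) * ℓ
        < (((Finset.range ℓ).filter fun j : ℕ => x (i + (j:ℤ)) ≠ B).card : ℝ) := by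
      have := (lt_div_iff₀ hℓpos).mp hr
      linarith
    have hIco : (ε/2) * ℓ < (((Finset.Ico i (i+(ℓ:ℤ))).filter fun k => x k ≠ B).card : ℝ) := by
      have hcc := card_filter_range_eq (fun k => x k ≠ B) i ℓ
      rw [← hcc]
      exact hcount
    obtain ⟨C, hC⟩ := risingSun (fun k => x k ≠ B) i ℓ (ε/2) (by linarith) hIco
    refine ⟨shiftZ C x, omega_shift hcomm C hx, ?_⟩
    intro m hm
    have hKl : ((K:ℝ)+1) ≤ (ℓ:ℝ) := by exact_mod_cast hℓK
    have hm' : ((m:ℝ)+1) ≤ (ε/2/2) * (ℓ:ℝ) := by nlinarith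
    have hCm := hC m hm'
    have he : ((Finset.Icc (0:ℤ) (m:ℤ)).filter fun k => shiftZ C x k ≠ B).card
        = ((Finset.Icc C (C+(m:ℤ))).filter fun k => x k ≠ B).card := by
      have h1 := card_filter_shift (fun k => x k ≠ B) 0 (m:ℤ) C
      have h2' : Finset.Icc ((0:ℤ)+C) ((m:ℤ)+C) = Finset.Icc C (C+(m:ℤ)) := by
        rw [zero_add, add_comm]
      rw [← h2', ← h1]
      rfl
    rw [he]
    exact hCm
  choose y hyΩ hygood using hK
  obtain ⟨Y, hYΩ, φ, hφ, hφt⟩ := (omega_compact hcont).isSeqCompact hyΩ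
  have hY0 : besicovitchDist Y (fun _ => B) = 0 := h2 hYΩ
  have hYgood : ∀ m : ℕ, (ε/2/2) * ((m:ℝ)+1)
      ≤ (((Finset.Icc (0:ℤ) (m:ℤ)).filter fun k => Y k ≠ B).card : ℝ) := by
    intro m
    have hag : ∀ᶠ j in atTop, ∀ k ∈ Finset.Icc (0:ℤ) (m:ℤ), y (φ j) k = Y k := by
      rw [eventually_all_finset]
      intro k hk
      have hk1 : Tendsto (fun j => y (φ j) k) atTop (nhds (Y k)) :=
        (tendsto_pi_nhds.mp hφt) k
      have hs : {Y k} ∈ nhds (Y k) := by rw [nhds_discrete]; exact mem_pure.mpr rfl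
      filter_upwards [hk1 hs] with j hj
      exact hj
    obtain ⟨j0, hj0⟩ : ∃ j0:ℕ, ((m:ℝ)+1) ≤ (ε/2/2)*((j0:ℝ)+1) := by
      obtain ⟨j0, hj0⟩ := exists_nat_ge (((m:ℝ)+1)/(ε/2/2))
      refine ⟨j0, ?_⟩
      rw [div_le_iff₀ (by linarith)] at hj0
      nlinarith
    obtain ⟨j, hjag, hjge⟩ := (hag.and (eventually_ge_atTop j0)).exists
    have hφj : ((j0:ℝ)) ≤ ((φ j : ℕ):ℝ) := by
      have hle : j ≤ φ j := hφ.le_apply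
      exact_mod_cast le_trans hjge hle
    have hthr : ((m:ℝ)+1) ≤ (ε/2/2)*(((φ j : ℕ):ℝ)+1) := by nlinarith
    have hgj := hygood (φ j) m hthr
    have hcongr : ((Finset.Icc (0:ℤ) (m:ℤ)).filter fun k => y (φ j) k ≠ B)
        = ((Finset.Icc (0:ℤ) (m:ℤ)).filter fun k => Y k ≠ B) := by
      apply Finset.filter_congr
      intro k hk
      rw [hjag k hk]
    rw [hcongr] at hgj
    exact hgj
  have hlow : ε/8 ≤ besicovitchDist Y (fun _ => B) := by
    apply le_besi
    intro n
    have h1 := hYgood n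
    have hsub : Finset.Icc (0:ℤ) (n:ℤ) ⊆ Finset.Icc (-(n:ℤ)) (n:ℤ) := by
      intro k hk; simp only [Finset.mem_Icc] at *; omega
    have h2c : ((Finset.Icc (0:ℤ) (n:ℤ)).filter fun k => Y k ≠ B).card
        ≤ ((Finset.Icc (-(n:ℤ)) (n:ℤ)).filter fun k => Y k ≠ B).card :=
      Finset.card_le_card (Finset.filter_subset_filter _ hsub)
    have hpos : (0:ℝ) < 2*(n:ℝ)+1 := by positivity
    rw [le_div_iff₀ hpos]
    calc ε/8 * (2*(n:ℝ)+1) ≤ (ε/2/2) * ((n:ℝ)+1) := by nlinarith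
      _ ≤ (((Finset.Icc (0:ℤ) (n:ℤ)).filter fun k => Y k ≠ B).card : ℝ) := h1
      _ ≤ (((Finset.Icc (-(n:ℤ)) (n:ℤ)).filter fun i => Y i ≠ (fun _ => B) i).card : ℝ) := by
          exact_mod_cast h2c
  rw [hY0] at hlow
  linarith

end main

end ANDproof

/-- For a cellular automaton `Φ` with quiescent state `B`, the following
are equivalent: (1) `Φ` is asymptotically nilpotent in density; (2) the limit set
`Ω_Φ` is contained in the Besicovitch class of `B^∞`; (3) the maximal density of
non-`B` symbols among length-`ℓ` words of the language of `Ω_Φ` tends to `0`. -/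
theorem asymptoticallyNilpotentInDensity_tfae
    {α : Type} [Fintype α] [DecidableEq α] [TopologicalSpace α] [DiscreteTopology α]
    (B : α) (Φ : (ℤ → α) → (ℤ → α))
    (hcont : Continuous Φ)
    (hcomm : ∀ x : ℤ → α, Φ (fun i => x (i + 1)) = fun i => Φ x (i + 1))
    (hq : Φ (fun _ => B) = fun _ => B) :
    List.TFAE
      [ ∀ ε : ℝ, 0 < ε → ∃ n : ℕ, ∀ x : ℤ → α,
          besicovitchDist (Φ^[n] x) (fun _ => B) < ε,
        (⋂ n : ℕ, Φ^[n] '' Set.univ) ⊆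
          {y : ℤ → α | besicovitchDist y (fun _ => B) = 0},
        Filter.Tendsto (fun ℓ : ℕ =>
            sSup {r : ℝ | ∃ x ∈ ⋂ n : ℕ, Φ^[n] '' Set.univ, ∃ i : ℤ,
              r = (((Finset.range ℓ).filter fun j : ℕ => x (i + (j : ℤ)) ≠ B).card : ℝ) / ℓ})
          Filter.atTop (nhds 0) ] := by
  tfae_have 1 → 2 := fun h1 => ANDproof.imp12 h1
  tfae_have 2 → 3 := fun h2 => ANDproof.imp23 hcont hcomm hq h2
  tfae_have 3 → 1 := fun h3 => ANDproof.imp31 hcont hcomm hq h3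
  tfae_finish
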